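/- arXiv:2001.01920 — 2 statements merged into one kernel-verified Lean document; each statement's English description precedes it below -/
import Mathlib

section
/- (Theorem 2, sufficient decrease, non-convex case.) Fix a base point w₀ ∈ ℝ^d, constants λ ≥ 0, μ > λ, γ ∈ [0,1) and B ≥ 1. Suppose each F_k has L-Lipschitz gradient and is λ-weakly convex (w ↦ F_k(w) + (λ/2)‖w‖² is convex), f has L-Lipschitz gradient, and the local functions are B-locally dissimilar at w₀. Let k_1, …, k_K be i.i.d. random device indices, each taking value k with probability p_k; set g = (1/K) Σ_{i=1}^K ∇F_{k_i}(w₀); and let j be a further random device index with the same distribution, independent of (k_1, …, k_K). For each device m and each realization of g, let w_m(g) be a γ-inexact minimizer of the FedDANE subproblem P_m with base point w₀, gradient estimate g and penalty μ. Define ρ = 1/μ − 3γ/(2(μ−λ)) − L(1+γ)²/(μ−λ)² − 3L/(2μ(μ−λ)) − (B² − 1)(L(1+γ)²/(μ−λ)² + L/(μ(μ−λ)) + γ/(μ−λ)). If ρ > 0, then E[f(w_j(g))] ≤ f(w₀) − ρ ‖∇f(w₀)‖², where the expectation is over the random indices (k_1, …, k_K) and j. -/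
open scoped RealInnerProductSpace

section Helpers

variable {E : Type*} [NormedAddCommGroup E] [InnerProductSpace ℝ E] [CompleteSpace E]

private lemma hasGradientAt_of_hasFDerivAt' {f : E → ℝ} {a x : E} {L : E →L[ℝ] ℝ}
    (h : HasFDerivAt f L x) (ha : ∀ v, L v = ⟪a, v⟫) : HasGradientAt f a x := by
  rw [hasGradientAt_iff_hasFDerivAt]
  have hL : InnerProductSpace.toDual ℝ E a = L := by
    ext v
    rw [InnerProductSpace.toDual_apply_apply, ha v]
  rw [hL]; exact h

private lemma hga_inner_sub (c w₀ x : E) :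
    HasGradientAt (fun v => ⟪c, v - w₀⟫) c x := by
  have h1 := ((InnerProductSpace.toDual ℝ E c).hasFDerivAt (x := x)).sub_const (⟪c, w₀⟫)
  have h : HasFDerivAt (fun v : E => ⟪c, v - w₀⟫) (InnerProductSpace.toDual ℝ E c) x := by
    simpa [InnerProductSpace.toDual_apply_apply, inner_sub_right] using h1
  exact hasGradientAt_of_hasFDerivAt' h fun v => InnerProductSpace.toDual_apply_apply

private lemma hga_quad (μc : ℝ) (w₀ x : E) :
    HasGradientAt (fun v => μc / 2 * ‖v - w₀‖ ^ 2) (μc • (x - w₀)) x := by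
  have hid : HasFDerivAt (fun v : E => v - w₀) (ContinuousLinearMap.id ℝ E) x :=
    (hasFDerivAt_id x).sub_const w₀
  have hinner := (hid.inner ℝ hid).const_mul (μc / 2)
  have hfun : (fun v : E => μc / 2 * ⟪v - w₀, v - w₀⟫) =
      fun v : E => μc / 2 * ‖v - w₀‖ ^ 2 := by
    funext v; rw [real_inner_self_eq_norm_sq]
  rw [hfun] at hinner
  refine hasGradientAt_of_hasFDerivAt' hinner fun v => ?_
  simp [fderivInnerCLM_apply, real_inner_smul_left]
  rw [real_inner_comm]
  ring

private lemma HasGradientAt.add' {f g : E → ℝ} {a b x : E}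
    (hf : HasGradientAt f a x) (hg : HasGradientAt g b x) :
    HasGradientAt (fun v => f v + g v) (a + b) x := by
  refine hasGradientAt_of_hasFDerivAt' (hf.hasFDerivAt.add hg.hasFDerivAt) fun v => ?_
  simp [InnerProductSpace.toDual_apply_apply, inner_add_left]

private lemma HasGradientAt.cmul {f : E → ℝ} {a x : E} (c : ℝ)
    (hf : HasGradientAt f a x) : HasGradientAt (fun v => c * f v) (c • a) x := by
  refine hasGradientAt_of_hasFDerivAt' (hf.hasFDerivAt.const_mul c) fun v => ?_
  simp [InnerProductSpace.toDual_apply_apply, real_inner_smul_left]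

private lemma hga_sum {ι : Type*} (s : Finset ι) (f : ι → E → ℝ) (a : ι → E) (x : E)
    (h : ∀ i ∈ s, HasGradientAt (f i) (a i) x) :
    HasGradientAt (fun v => ∑ i ∈ s, f i v) (∑ i ∈ s, a i) x := by
  refine hasGradientAt_of_hasFDerivAt'
    (HasFDerivAt.fun_sum (fun i hi => (h i hi).hasFDerivAt)) fun v => ?_
  simp [InnerProductSpace.toDual_apply_apply, sum_inner]

private lemma ConvexOn.grad_le {h : E → ℝ} (hc : ConvexOn ℝ Set.univ h) {a x : E}
    (hx : HasGradientAt h a x) (y : E) : h x + ⟪a, y - x⟫ ≤ h y := by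
  set φ : ℝ → ℝ := fun t => h (x + t • (y - x)) with hφ
  have hφc : ConvexOn ℝ Set.univ φ := by
    have := hc.comp_affineMap (AffineMap.lineMap x y)
    have e : φ = h ∘ AffineMap.lineMap x y := by
      funext t
      show h (x + t • (y - x)) = h (AffineMap.lineMap x y t)
      rw [AffineMap.lineMap_apply]
      congr 1
      simp only [vsub_eq_sub, vadd_eq_add]
      abel
    rw [e]; rw [Set.preimage_univ] at this; exact this
  have hc1 : HasDerivAt (fun t : ℝ => x + t • (y - x)) (y - x) 0 := by
    simpa using ((hasDerivAt_id (0:ℝ)).smul_const (y - x)).const_add x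
  have hφd : HasDerivAt φ ⟪a, y - x⟫ 0 := by
    have hx' : HasFDerivAt h (InnerProductSpace.toDual ℝ E a) (x + (0:ℝ) • (y - x)) := by
      simpa using hx.hasFDerivAt
    have := hx'.comp_hasDerivAt 0 hc1
    simp [InnerProductSpace.toDual_apply_apply] at this; exact this
  have hs := hφc.le_slope_of_hasDerivAt (Set.mem_univ 0) (Set.mem_univ 1)
    (by norm_num) hφd
  rw [slope_def_field] at hs
  simp [φ] at hs
  linarith

private lemma grad_mono {h : E → ℝ} (hc : ConvexOn ℝ Set.univ h) {a b x y : E}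
    (hx : HasGradientAt h a x) (hy : HasGradientAt h b y) :
    0 ≤ ⟪a - b, x - y⟫ := by
  have h1 := hc.grad_le hx y
  have h2 := hc.grad_le hy x
  have e1 : ⟪a, y - x⟫ = -⟪a, x - y⟫ := by
    rw [← inner_neg_right]; congr 1; abel
  rw [inner_sub_left]
  linarith [e1 ▸ h1, h2]

private lemma descent_lemma {h : E → ℝ} {h' : E → E} {L : ℝ} (hL : 0 ≤ L)
    (hd : ∀ v, HasGradientAt h (h' v) v)
    (hlip : ∀ a b, ‖h' a - h' b‖ ≤ L * ‖a - b‖) (x y : E) :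
    h y ≤ h x + ⟪h' x, y - x⟫ + L * ‖y - x‖ ^ 2 := by
  set s := segment ℝ x y with hs
  set φ : E → ℝ := fun v => h v - ⟪h' x, v⟫ with hφ
  have hseg : ∀ v ∈ s, ‖v - x‖ ≤ ‖y - x‖ := by
    intro v hv
    rw [hs, segment_eq_image'] at hv
    obtain ⟨t, ht, rfl⟩ := hv
    rw [add_sub_cancel_left, norm_smul, Real.norm_eq_abs, abs_of_nonneg ht.1]
    nlinarith [norm_nonneg (y - x), ht.2]
  have hφd : ∀ v ∈ s, HasFDerivWithinAt φ
      (InnerProductSpace.toDual ℝ E (h' v - h' x)) s v := by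
    intro v hv
    have h0 := (hd v).hasFDerivAt.sub
      ((InnerProductSpace.toDual ℝ E (h' x)).hasFDerivAt (x := v))
    have hfun : (h - ⇑(InnerProductSpace.toDual ℝ E (h' x))) = φ := by
      funext w; simp [hφ, InnerProductSpace.toDual_apply_apply]
    rw [hfun] at h0
    rw [map_sub]
    exact h0.hasFDerivWithinAt
  have hbound : ∀ v ∈ s, ‖InnerProductSpace.toDual ℝ E (h' v - h' x)‖ ≤ L * ‖y - x‖ := by
    intro v hv
    rw [LinearIsometryEquiv.norm_map]
    exact le_trans (hlip v x) (mul_le_mul_of_nonneg_left (hseg v hv) hL)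
  have hmv := (convex_segment x y).norm_image_sub_le_of_norm_hasFDerivWithin_le
    hφd hbound (left_mem_segment ℝ x y) (right_mem_segment ℝ x y)
  have h1 : φ y - φ x ≤ L * ‖y - x‖ * ‖y - x‖ :=
    le_trans (le_abs_self _) hmv
  have h2 : φ y - φ x = h y - h x - ⟪h' x, y - x⟫ := by
    simp only [hφ, inner_sub_right]
    ring
  nlinarith [h1, h2]

end Helpers

private lemma marg {N K : ℕ} (p : Fin N → ℝ) (hpsum : ∑ k, p k = 1)
    (a : Fin N → ℝ) (i₀ : Fin K) :
    ∑ σ : Fin K → Fin N, (∏ i, p (σ i)) * a (σ i₀) = ∑ k, p k * a k := by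
  have key : ∀ σ : Fin K → Fin N,
      (∏ i, p (σ i)) * a (σ i₀) =
        ∏ i, (if i = i₀ then p (σ i) * a (σ i) else p (σ i)) := by
    intro σ
    have h1 : (fun i => if i = i₀ then p (σ i) * a (σ i) else p (σ i)) =
        fun i => p (σ i) * (if i = i₀ then a (σ i) else 1) := by
      funext i; split_ifs <;> ring
    rw [h1, Finset.prod_mul_distrib, Finset.prod_ite_eq']
    simp
  calc ∑ σ : Fin K → Fin N, (∏ i, p (σ i)) * a (σ i₀)
      = ∑ σ : Fin K → Fin N,
          ∏ i, (if i = i₀ then p (σ i) * a (σ i) else p (σ i)) :=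
        Finset.sum_congr rfl fun σ _ => key σ
    _ = ∏ i : Fin K, ∑ k : Fin N, (if i = i₀ then p k * a k else p k) :=
        (Fintype.prod_sum (fun (i : Fin K) (k : Fin N) => if i = i₀ then p k * a k else p k)).symm
    _ = ∑ k, p k * a k := by
        have h2 : ∀ i : Fin K,
            (∑ k : Fin N, if i = i₀ then p k * a k else p k) =
              if i = i₀ then (∑ k, p k * a k) else 1 := by
          intro i; split_ifs with h <;> simp [hpsum]
        rw [Finset.prod_congr rfl fun i _ => h2 i, Finset.prod_ite_eq']
        simp

private lemma sum_pi_prod {N K : ℕ} (p : Fin N → ℝ) (hpsum : ∑ k, p k = 1) :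
    ∑ σ : Fin K → Fin N, (∏ i, p (σ i)) = 1 := by
  rw [← Fintype.prod_sum (fun (_ : Fin K) (k : Fin N) => p k)]
  simp [hpsum]

private lemma real_chain (μ lam γ L G ng r fu fw iuw iub ibw I₃ nuw A : ℝ)
    (hμ0 : 0 < μ) (ht0 : 0 < μ - lam) (hγ0 : 0 ≤ γ) (hL : 0 ≤ L)
    (hG0 : 0 ≤ G) (hr0 : 0 ≤ r) (hng : 0 ≤ ng)
    (hdes : fu ≤ fw + iuw + L * nuw ^ 2)
    (hsplit : iuw = iub + ibw)
    (hub : iub ≤ G * (γ * r))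
    (hmu : μ * ibw = -A - I₃)
    (hI3 : |I₃| ≤ G * (L * r))
    (hnu : nuw ≤ (1 + γ) * r) (hnuw0 : 0 ≤ nuw)
    (hrg : (μ - lam) * r ≤ ng) :
    fu ≤ fw - A / μ + (γ + L / μ) / (μ - lam) * ((G ^ 2 + ng ^ 2) / 2)
      + L * (1 + γ) ^ 2 / (μ - lam) ^ 2 * ng ^ 2 := by
  have hμne : μ ≠ 0 := ne_of_gt hμ0
  have htne : μ - lam ≠ 0 := ne_of_gt ht0
  have hr_le : r ≤ ng / (μ - lam) := by
    rw [le_div_iff₀ ht0]; linarith [mul_comm r (μ - lam)]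
  have hibw : ibw ≤ (-A + G * (L * r)) / μ := by
    rw [le_div_iff₀ hμ0]
    have h1 := neg_abs_le I₃
    linarith [mul_comm ibw μ]
  have hnuw2 : L * nuw ^ 2 ≤ L * ((1 + γ) * r) ^ 2 :=
    mul_le_mul_of_nonneg_left (pow_le_pow_left₀ hnuw0 hnu 2) hL
  have step1 : fu ≤ fw + G * (γ * r) + (-A + G * (L * r)) / μ + L * ((1 + γ) * r) ^ 2 := by
    have h2 : ibw ≤ (-A + G * (L * r)) / μ := hibw
    linarith [hdes, hub, h2, hnuw2, hsplit]
  set s := ng / (μ - lam) with hs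
  have hs0 : 0 ≤ s := div_nonneg hng ht0.le
  have step2 : fu ≤ fw + G * (γ * s) + (-A + G * (L * s)) / μ + L * ((1 + γ) * s) ^ 2 := by
    have e1 : G * (γ * r) ≤ G * (γ * s) :=
      mul_le_mul_of_nonneg_left (mul_le_mul_of_nonneg_left hr_le hγ0) hG0
    have e2 : (-A + G * (L * r)) / μ ≤ (-A + G * (L * s)) / μ := by
      gcongr
    have e3 : L * ((1 + γ) * r) ^ 2 ≤ L * ((1 + γ) * s) ^ 2 := by
      apply mul_le_mul_of_nonneg_left _ hL
      apply pow_le_pow_left₀ (by positivity)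
        (mul_le_mul_of_nonneg_left hr_le (by linarith)) 2
    linarith [step1]
  have hGg : G * ng ≤ (G ^ 2 + ng ^ 2) / 2 := by nlinarith [sq_nonneg (G - ng)]
  have ec : fw + G * (γ * s) + (-A + G * (L * s)) / μ + L * ((1 + γ) * s) ^ 2
      = fw - A / μ + (γ + L / μ) / (μ - lam) * (G * ng)
        + L * (1 + γ) ^ 2 / (μ - lam) ^ 2 * ng ^ 2 := by
    rw [hs]; field_simp; ring
  have hcoef0 : 0 ≤ (γ + L / μ) / (μ - lam) :=
    div_nonneg (add_nonneg hγ0 (div_nonneg hL hμ0.le)) ht0.le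
  have hfin := mul_le_mul_of_nonneg_left hGg hcoef0
  rw [ec] at step2
  linarith [step2, hfin]

private lemma sum_linear {ι : Type*} [Fintype ι] (π X Y : ι → ℝ) (C0 μ c1 c2 G2 : ℝ) :
    ∑ σ : ι, π σ * (C0 - X σ / μ + c1 * ((G2 + Y σ) / 2) + c2 * Y σ)
      = (∑ σ : ι, π σ) * C0 - (∑ σ : ι, π σ * X σ) / μ
        + c1 * (((∑ σ : ι, π σ) * G2 + ∑ σ : ι, π σ * Y σ) / 2)
        + c2 * (∑ σ : ι, π σ * Y σ) := by
  have h1 : ∀ σ : ι, π σ * (C0 - X σ / μ + c1 * ((G2 + Y σ) / 2) + c2 * Y σ)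
      = π σ * C0 - (π σ * X σ) / μ
        + c1 * ((π σ * G2 + π σ * Y σ) / 2) + c2 * (π σ * Y σ) := fun σ => by ring
  rw [Finset.sum_congr rfl fun σ _ => h1 σ]
  rw [Finset.sum_add_distrib, Finset.sum_add_distrib, Finset.sum_sub_distrib,
    ← Finset.sum_mul, ← Finset.sum_div, ← Finset.mul_sum, ← Finset.mul_sum,
    ← Finset.sum_div, Finset.sum_add_distrib, ← Finset.sum_mul]


set_option maxHeartbeats 1000000 in
/-- Theorem 2, sufficient decrease, non-convex case.  Each `F k`
has `L`-Lipschitz gradient and is `λ`-weakly convex, `μ > λ ≥ 0`, `f` has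
`L`-Lipschitz gradient, and the local functions are `B`-locally dissimilar at `w₀`.
Sample `K` i.i.d. device indices (expectation = sum over `σ : Fin K → Fin N` with
weight `∏ i, p (σ i)`), set `gs σ = (1/K) ∑ i, ∇F_{σ i}(w₀)`, and sample an
independent device `j` with probability `p j`.  For each device `m` and realization
`σ`, `w m σ` is a `γ`-inexact minimizer of the FedDANE subproblem with gradient
estimate `gs σ`.  If
`ρ = 1/μ - 3γ/(2(μ-λ)) - L(1+γ)²/(μ-λ)² - 3L/(2μ(μ-λ))
     - (B²-1)(L(1+γ)²/(μ-λ)² + L/(μ(μ-λ)) + γ/(μ-λ)) > 0`,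
then `E[f(w_j(g))] ≤ f(w₀) - ρ ‖∇f(w₀)‖²`. -/
theorem feddane_sufficient_decrease_nonconvex {d N K : ℕ} (hK : 0 < K)
    (F : Fin N → EuclideanSpace ℝ (Fin d) → ℝ) (hF : ∀ k, ContDiff ℝ 1 (F k))
    (p : Fin N → ℝ) (hp : ∀ k, 0 ≤ p k) (hpsum : ∑ k, p k = 1)
    (f : EuclideanSpace ℝ (Fin d) → ℝ) (hf : f = fun w => ∑ k, p k * F k w)
    (w₀ : EuclideanSpace ℝ (Fin d)) (lam μ γ L B : ℝ)
    (hlam : 0 ≤ lam) (hμ : lam < μ) (hγ0 : 0 ≤ γ) (hγ1 : γ < 1) (hL : 0 ≤ L)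
    (hB : 1 ≤ B)
    (hweak : ∀ k, ConvexOn ℝ Set.univ fun w => F k w + lam / 2 * ‖w‖ ^ 2)
    (hFlip : ∀ k x y, ‖gradient (F k) x - gradient (F k) y‖ ≤ L * ‖x - y‖)
    (hflip : ∀ x y, ‖gradient f x - gradient f y‖ ≤ L * ‖x - y‖)
    (hdissim : ∑ k, p k * ‖gradient (F k) w₀‖ ^ 2 ≤ B ^ 2 * ‖gradient f w₀‖ ^ 2)
    (gs : (Fin K → Fin N) → EuclideanSpace ℝ (Fin d))
    (hgs : gs = fun σ => (1 / (K : ℝ)) • ∑ i, gradient (F (σ i)) w₀)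
    (P : Fin N → EuclideanSpace ℝ (Fin d) → EuclideanSpace ℝ (Fin d) → ℝ)
    (hP : P = fun m gv v =>
      F m v + ⟪gv - gradient (F m) w₀, v - w₀⟫ + μ / 2 * ‖v - w₀‖ ^ 2)
    (w wbar : Fin N → (Fin K → Fin N) → EuclideanSpace ℝ (Fin d))
    (hmin : ∀ m σ v, P m (gs σ) (wbar m σ) ≤ P m (gs σ) v)
    (hinexact : ∀ m σ, ‖w m σ - wbar m σ‖ ≤ γ * ‖wbar m σ - w₀‖)
    (ρ : ℝ)
    (hρ : ρ = 1 / μ - 3 * γ / (2 * (μ - lam)) - L * (1 + γ) ^ 2 / (μ - lam) ^ 2 -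
      3 * L / (2 * μ * (μ - lam)) -
      (B ^ 2 - 1) * (L * (1 + γ) ^ 2 / (μ - lam) ^ 2 + L / (μ * (μ - lam)) +
        γ / (μ - lam)))
    (hρpos : 0 < ρ) :
    (∑ σ : Fin K → Fin N, ∑ j : Fin N,
        ((∏ i, p (σ i)) * p j) * f (w j σ)) ≤
      f w₀ - ρ * ‖gradient f w₀‖ ^ 2 := by
  have hμ0 : (0:ℝ) < μ := lt_of_le_of_lt hlam hμ
  have ht0 : (0:ℝ) < μ - lam := sub_pos.mpr hμ
  have hμne : μ ≠ 0 := ne_of_gt hμ0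
  have htne : μ - lam ≠ 0 := ne_of_gt ht0
  have hK0 : (0:ℝ) < (K:ℝ) := Nat.cast_pos.mpr hK
  set Gv := gradient f w₀ with hGv
  set G := ‖Gv‖ with hGdef
  have hG0 : (0:ℝ) ≤ G := norm_nonneg _
  have hFd : ∀ k v, HasGradientAt (F k) (gradient (F k) v) v := fun k v =>
    (((hF k).differentiable one_ne_zero) v).hasGradientAt
  have hfc : ContDiff ℝ 1 f := by
    rw [hf]; exact ContDiff.sum fun k _ => contDiff_const.mul (hF k)
  have hfd : ∀ v, HasGradientAt f (gradient f v) v := fun v =>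
    ((hfc.differentiable one_ne_zero) v).hasGradientAt
  have hgradf : Gv = ∑ k, p k • gradient (F k) w₀ := by
    rw [hGv]
    refine HasGradientAt.gradient ?_
    rw [hf]
    exact hga_sum Finset.univ (fun k v => p k * F k v)
      (fun k => p k • gradient (F k) w₀) w₀
      (fun k _ => HasGradientAt.cmul (p k) (hFd k w₀))
  set c1 : ℝ := (γ + L / μ) / (μ - lam) with hc1
  set c2 : ℝ := L * (1 + γ) ^ 2 / (μ - lam) ^ 2 with hc2
  have hc10 : 0 ≤ c1 := by
    rw [hc1]; exact div_nonneg (add_nonneg hγ0 (div_nonneg hL hμ0.le)) ht0.le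
  have hc20 : 0 ≤ c2 := by rw [hc2]; positivity
  set R : (Fin K → Fin N) → ℝ := fun σ =>
    f w₀ - ⟪Gv, gs σ⟫ / μ + c1 * ((G ^ 2 + ‖gs σ‖ ^ 2) / 2) + c2 * ‖gs σ‖ ^ 2
    with hR
  -- key per-σ, per-device bound
  have key : ∀ m σ, f (w m σ) ≤ R σ := by
    intro m σ
    have hPg : ∀ v, HasGradientAt (P m (gs σ))
        (gradient (F m) v + (gs σ - gradient (F m) w₀) + μ • (v - w₀)) v := by
      intro v
      simp only [hP]
      exact ((hFd m v).add' (hga_inner_sub _ _ _)).add' (hga_quad μ w₀ v)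
    have hb0 : gradient (F m) (wbar m σ) + (gs σ - gradient (F m) w₀)
        + μ • (wbar m σ - w₀) = 0 := by
      have hloc : IsLocalMin (P m (gs σ)) (wbar m σ) :=
        Filter.Eventually.of_forall fun v => hmin m σ v
      have hz := hloc.hasFDerivAt_eq_zero (hPg (wbar m σ)).hasFDerivAt
      apply (InnerProductSpace.toDual ℝ (EuclideanSpace ℝ (Fin d))).injective
      rw [map_zero]; exact hz
    have hFb : gradient (F m) (wbar m σ) =
        gradient (F m) w₀ - gs σ - μ • (wbar m σ - w₀) := by
      have h' : gradient (F m) (wbar m σ) =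
          (gradient (F m) (wbar m σ) + (gs σ - gradient (F m) w₀)
            + μ • (wbar m σ - w₀))
          + (gradient (F m) w₀ - gs σ - μ • (wbar m σ - w₀)) := by abel
      rw [h', hb0, zero_add]
    -- strong monotonicity bound on ‖wbar - w₀‖
    have hq : ∀ x : EuclideanSpace ℝ (Fin d),
        HasGradientAt (fun v => lam / 2 * ‖v‖ ^ 2) (lam • x) x := by
      intro x; simpa using hga_quad lam 0 x
    have hcv : ∀ x, HasGradientAt (fun v => F m v + lam / 2 * ‖v‖ ^ 2)
        (gradient (F m) x + lam • x) x := fun x => (hFd m x).add' (hq x)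
    have hmono := grad_mono (hweak m) (hcv w₀) (hcv (wbar m σ))
    have hvec : (gradient (F m) w₀ + lam • w₀)
        - (gradient (F m) (wbar m σ) + lam • wbar m σ)
        = gs σ + (μ - lam) • (wbar m σ - w₀) := by
      rw [hFb]; simp only [sub_smul, smul_sub]; abel
    rw [hvec] at hmono
    have hip : ⟪gs σ + (μ - lam) • (wbar m σ - w₀), w₀ - wbar m σ⟫
        = ⟪gs σ, w₀ - wbar m σ⟫ - (μ - lam) * ‖wbar m σ - w₀‖ ^ 2 := by
      rw [inner_add_left, real_inner_smul_left]
      have h2 : ⟪wbar m σ - w₀, w₀ - wbar m σ⟫ = -(‖wbar m σ - w₀‖ ^ 2) := by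
        rw [show w₀ - wbar m σ = -(wbar m σ - w₀) by abel, inner_neg_right,
          real_inner_self_eq_norm_sq]
      rw [h2]; ring
    have hCS : ⟪gs σ, w₀ - wbar m σ⟫ ≤ ‖gs σ‖ * ‖wbar m σ - w₀‖ := by
      have h3 := real_inner_le_norm (gs σ) (w₀ - wbar m σ)
      rwa [norm_sub_rev] at h3
    have hrg : (μ - lam) * ‖wbar m σ - w₀‖ ≤ ‖gs σ‖ := by
      rcases eq_or_lt_of_le (norm_nonneg (wbar m σ - w₀)) with h0 | h0
      · rw [← h0, mul_zero]; exact norm_nonneg _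
      · nlinarith [hmono, hip, hCS]
    -- descent and inner product manipulations
    have hdes := descent_lemma hL hfd hflip w₀ (w m σ)
    rw [← hGv] at hdes
    have hsplit : ⟪Gv, w m σ - w₀⟫
        = ⟪Gv, w m σ - wbar m σ⟫ + ⟪Gv, wbar m σ - w₀⟫ := by
      rw [← inner_add_right]; congr 1; abel
    have hub : ⟪Gv, w m σ - wbar m σ⟫ ≤ G * (γ * ‖wbar m σ - w₀‖) := by
      calc ⟪Gv, w m σ - wbar m σ⟫ ≤ ‖Gv‖ * ‖w m σ - wbar m σ‖ :=
            real_inner_le_norm _ _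
        _ ≤ G * (γ * ‖wbar m σ - w₀‖) :=
            mul_le_mul_of_nonneg_left (hinexact m σ) hG0
    have hmu : μ * ⟪Gv, wbar m σ - w₀⟫
        = -⟪Gv, gs σ⟫ - ⟪Gv, gradient (F m) (wbar m σ) - gradient (F m) w₀⟫ := by
      have hveq : μ • (wbar m σ - w₀)
          = -gs σ - (gradient (F m) (wbar m σ) - gradient (F m) w₀) := by
        have h' : μ • (wbar m σ - w₀)
            = (gradient (F m) (wbar m σ) + (gs σ - gradient (F m) w₀)
              + μ • (wbar m σ - w₀))
            + (-gs σ - (gradient (F m) (wbar m σ) - gradient (F m) w₀)) := by abel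
        rw [h', hb0, zero_add]
      rw [← real_inner_smul_right, hveq, inner_sub_right, inner_neg_right]
    have hI3 : |⟪Gv, gradient (F m) (wbar m σ) - gradient (F m) w₀⟫|
        ≤ G * (L * ‖wbar m σ - w₀‖) := by
      calc |⟪Gv, gradient (F m) (wbar m σ) - gradient (F m) w₀⟫|
          ≤ ‖Gv‖ * ‖gradient (F m) (wbar m σ) - gradient (F m) w₀‖ :=
            abs_real_inner_le_norm _ _
        _ ≤ G * (L * ‖wbar m σ - w₀‖) :=
            mul_le_mul_of_nonneg_left (hFlip m (wbar m σ) w₀) hG0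
    have hnu : ‖w m σ - w₀‖ ≤ (1 + γ) * ‖wbar m σ - w₀‖ := by
      have h4 : w m σ - w₀ = (w m σ - wbar m σ) + (wbar m σ - w₀) := by abel
      calc ‖w m σ - w₀‖ ≤ ‖w m σ - wbar m σ‖ + ‖wbar m σ - w₀‖ := by
            rw [h4]; exact norm_add_le _ _
        _ ≤ γ * ‖wbar m σ - w₀‖ + ‖wbar m σ - w₀‖ := by
            linarith [hinexact m σ]
        _ = (1 + γ) * ‖wbar m σ - w₀‖ := by ring
    have hchain := real_chain μ lam γ L G ‖gs σ‖ ‖wbar m σ - w₀‖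
      (f (w m σ)) (f w₀) ⟪Gv, w m σ - w₀⟫ ⟪Gv, w m σ - wbar m σ⟫
      ⟪Gv, wbar m σ - w₀⟫ ⟪Gv, gradient (F m) (wbar m σ) - gradient (F m) w₀⟫
      ‖w m σ - w₀‖ ⟪Gv, gs σ⟫
      hμ0 ht0 hγ0 hL hG0 (norm_nonneg _) (norm_nonneg _)
      hdes hsplit hub hmu hI3 hnu (norm_nonneg _) hrg
    rw [hR]
    simpa [hc1, hc2] using hchain
  have hKne : (K:ℝ) ≠ 0 := ne_of_gt hK0
  -- per-σ bound on ‖gs σ‖²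
  have hgs2 : ∀ σ : Fin K → Fin N,
      ‖gs σ‖ ^ 2 ≤ (1 / (K:ℝ)) * ∑ i, ‖gradient (F (σ i)) w₀‖ ^ 2 := by
    intro σ
    have h1 : ‖∑ i, gradient (F (σ i)) w₀‖ ≤ ∑ i, ‖gradient (F (σ i)) w₀‖ :=
      norm_sum_le _ _
    have h2 : (∑ i : Fin K, ‖gradient (F (σ i)) w₀‖) ^ 2
        ≤ (K:ℝ) * ∑ i, ‖gradient (F (σ i)) w₀‖ ^ 2 := by
      have h3 := sq_sum_le_card_mul_sum_sq
        (s := (Finset.univ : Finset (Fin K)))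
        (f := fun i => ‖gradient (F (σ i)) w₀‖)
      simpa using h3
    have h4 : ‖∑ i, gradient (F (σ i)) w₀‖ ^ 2
        ≤ (K:ℝ) * ∑ i, ‖gradient (F (σ i)) w₀‖ ^ 2 :=
      le_trans (pow_le_pow_left₀ (norm_nonneg _) h1 2) h2
    have h5 : ‖gs σ‖ ^ 2 = (1/(K:ℝ))^2 * ‖∑ i, gradient (F (σ i)) w₀‖ ^ 2 := by
      simp only [hgs]
      rw [norm_smul, Real.norm_eq_abs, abs_of_pos (by positivity : (0:ℝ) < 1/(K:ℝ))]
      ring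
    rw [h5]
    calc (1/(K:ℝ))^2 * ‖∑ i, gradient (F (σ i)) w₀‖ ^ 2
        ≤ (1/(K:ℝ))^2 * ((K:ℝ) * ∑ i, ‖gradient (F (σ i)) w₀‖ ^ 2) :=
          mul_le_mul_of_nonneg_left h4 (by positivity)
      _ = (1/(K:ℝ)) * ∑ i, ‖gradient (F (σ i)) w₀‖ ^ 2 := by
          field_simp
  have hπ0 : ∀ σ : Fin K → Fin N, (0:ℝ) ≤ ∏ i, p (σ i) := fun σ =>
    Finset.prod_nonneg fun i _ => hp _
  have main1 : (∑ σ : Fin K → Fin N, ∑ j : Fin N, ((∏ i, p (σ i)) * p j) * f (w j σ))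
      ≤ ∑ σ : Fin K → Fin N, (∏ i, p (σ i)) * R σ := by
    refine Finset.sum_le_sum fun σ _ => ?_
    calc ∑ j : Fin N, ((∏ i, p (σ i)) * p j) * f (w j σ)
        ≤ ∑ j : Fin N, ((∏ i, p (σ i)) * p j) * R σ :=
          Finset.sum_le_sum fun j _ =>
            mul_le_mul_of_nonneg_left (key j σ) (mul_nonneg (hπ0 σ) (hp j))
      _ = (∏ i, p (σ i)) * R σ := by
          rw [← Finset.sum_mul, ← Finset.mul_sum, hpsum, mul_one]
  have hS1 : ∑ σ : Fin K → Fin N, (∏ i, p (σ i)) = 1 := sum_pi_prod p hpsum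
  have hS2 : ∑ σ : Fin K → Fin N, (∏ i, p (σ i)) * ⟪Gv, gs σ⟫ = G ^ 2 := by
    have hinner : ∀ σ : Fin K → Fin N,
        ⟪Gv, gs σ⟫ = ∑ i : Fin K, (1/(K:ℝ)) * ⟪Gv, gradient (F (σ i)) w₀⟫ := by
      intro σ
      simp only [hgs]
      rw [real_inner_smul_right, inner_sum, Finset.mul_sum]
    have e1 : ∀ σ : Fin K → Fin N, (∏ i, p (σ i)) * ⟪Gv, gs σ⟫
        = ∑ i : Fin K, (1/(K:ℝ)) * ((∏ i', p (σ i')) * ⟪Gv, gradient (F (σ i)) w₀⟫) := by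
      intro σ
      rw [hinner σ, Finset.mul_sum]
      exact Finset.sum_congr rfl fun i _ => by ring
    rw [Finset.sum_congr rfl fun σ _ => e1 σ, Finset.sum_comm]
    have e2 : ∀ i : Fin K,
        (∑ σ : Fin K → Fin N,
          (1/(K:ℝ)) * ((∏ i', p (σ i')) * ⟪Gv, gradient (F (σ i)) w₀⟫))
        = (1/(K:ℝ)) * ∑ k, p k * ⟪Gv, gradient (F k) w₀⟫ := by
      intro i
      rw [← Finset.mul_sum, marg p hpsum (fun k => ⟪Gv, gradient (F k) w₀⟫) i]
    rw [Finset.sum_congr rfl fun i _ => e2 i, Finset.sum_const, Finset.card_univ,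
      Fintype.card_fin, nsmul_eq_mul]
    have e3 : (∑ k, p k * ⟪Gv, gradient (F k) w₀⟫) = G ^ 2 := by
      have e4 : (∑ k, p k * ⟪Gv, gradient (F k) w₀⟫)
          = ⟪Gv, ∑ k, p k • gradient (F k) w₀⟫ := by
        rw [inner_sum]
        exact Finset.sum_congr rfl fun k _ => (real_inner_smul_right _ _ _).symm
      rw [e4, ← hgradf, real_inner_self_eq_norm_sq, ← hGdef]
    rw [e3]
    field_simp
  have hS3 : ∑ σ : Fin K → Fin N, (∏ i, p (σ i)) * ‖gs σ‖ ^ 2 ≤ B ^ 2 * G ^ 2 := by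
    calc ∑ σ : Fin K → Fin N, (∏ i, p (σ i)) * ‖gs σ‖ ^ 2
        ≤ ∑ σ : Fin K → Fin N, (∏ i, p (σ i)) *
            ((1/(K:ℝ)) * ∑ i, ‖gradient (F (σ i)) w₀‖ ^ 2) :=
          Finset.sum_le_sum fun σ _ =>
            mul_le_mul_of_nonneg_left (hgs2 σ) (hπ0 σ)
      _ = ∑ i : Fin K, ∑ σ : Fin K → Fin N,
            (1/(K:ℝ)) * ((∏ i', p (σ i')) * ‖gradient (F (σ i)) w₀‖ ^ 2) := by
          have e : ∀ σ : Fin K → Fin N,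
              (∏ i', p (σ i')) * ((1/(K:ℝ)) * ∑ i, ‖gradient (F (σ i)) w₀‖ ^ 2)
              = ∑ i : Fin K, (1/(K:ℝ)) * ((∏ i', p (σ i')) * ‖gradient (F (σ i)) w₀‖ ^ 2) := by
            intro σ
            rw [Finset.mul_sum, Finset.mul_sum]
            exact Finset.sum_congr rfl fun i _ => by ring
          rw [Finset.sum_congr rfl fun σ _ => e σ, Finset.sum_comm]
      _ = ∑ i : Fin K, (1/(K:ℝ)) * ∑ k, p k * ‖gradient (F k) w₀‖ ^ 2 := by
          exact Finset.sum_congr rfl fun i _ => by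
            rw [← Finset.mul_sum, marg p hpsum (fun k => ‖gradient (F k) w₀‖ ^ 2) i]
      _ = ∑ k, p k * ‖gradient (F k) w₀‖ ^ 2 := by
          rw [Finset.sum_const, Finset.card_univ, Fintype.card_fin, nsmul_eq_mul]
          field_simp
      _ ≤ B ^ 2 * G ^ 2 := hdissim
  have hexp := sum_linear (ι := Fin K → Fin N) (fun σ => ∏ i, p (σ i))
      (fun σ => ⟪Gv, gs σ⟫) (fun σ => ‖gs σ‖ ^ 2) (f w₀) μ c1 c2 (G ^ 2)
  rw [hS1, hS2, one_mul, one_mul] at hexp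
  simp only [hR] at main1
  set S3 := ∑ σ : Fin K → Fin N, (∏ i, p (σ i)) * ‖gs σ‖ ^ 2 with hS3def
  have hfinal : f w₀ - G ^ 2 / μ + c1 * ((G ^ 2 + S3) / 2) + c2 * S3
      ≤ f w₀ - ρ * G ^ 2 := by
    have hco : 1/μ - c1 * (1 + B^2)/2 - c2 * B^2 - ρ = (B^2 * (γ + L/μ))/(2*(μ - lam)) := by
      rw [hρ, hc1, hc2]; field_simp; ring
    have hex0 : 0 ≤ (B^2 * (γ + L/μ))/(2*(μ - lam)) :=
      div_nonneg (mul_nonneg (sq_nonneg B) (add_nonneg hγ0 (div_nonneg hL hμ0.le)))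
        (by linarith)
    have h1 : c1 * ((G^2 + S3)/2) ≤ c1 * ((G^2 + B^2*G^2)/2) :=
      mul_le_mul_of_nonneg_left (by linarith [hS3]) hc10
    have h2 : c2 * S3 ≤ c2 * (B^2*G^2) := mul_le_mul_of_nonneg_left hS3 hc20
    have h3 : 0 ≤ (1/μ - c1 * (1 + B^2)/2 - c2 * B^2 - ρ) * G^2 := by
      rw [hco]; exact mul_nonneg hex0 (sq_nonneg G)
    have h4 : f w₀ - G^2/μ + c1*((G^2 + B^2*G^2)/2) + c2*(B^2*G^2)
        = f w₀ - ρ*G^2 - (1/μ - c1 * (1 + B^2)/2 - c2 * B^2 - ρ)*G^2 := by ring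
    linarith [h1, h2, h3, h4]
  calc (∑ σ : Fin K → Fin N, ∑ j : Fin N, ((∏ i, p (σ i)) * p j) * f (w j σ))
      ≤ ∑ σ : Fin K → Fin N, (∏ i, p (σ i)) *
          (f w₀ - ⟪Gv, gs σ⟫ / μ + c1 * ((G ^ 2 + ‖gs σ‖ ^ 2) / 2) + c2 * ‖gs σ‖ ^ 2) := main1
    _ = f w₀ - G ^ 2 / μ + c1 * ((G ^ 2 + S3) / 2) + c2 * S3 := hexp
    _ ≤ f w₀ - ρ * G ^ 2 := hfinal
end

section
/- (One-step decrease for exact FedDANE with a single selected device, convex case.) Fix w₀ ∈ ℝ^d, μ > 0 and B ≥ 1. Suppose each F_k is convex with L-Lipschitz gradient, f has L-Lipschitz gradient, and Σ_{k=1}^N p_k ‖∇F_k(w₀)‖² ≤ B² ‖∇f(w₀)‖². Take g = ∇f(w₀) (the exact full gradient) and for each device k let w̲_k be the exact minimizer of the FedDANE subproblem P_k with base point w₀, gradient estimate g and penalty μ. Then Σ_{k=1}^N p_k f(w̲_k) ≤ f(w₀) − (1/μ − 5L/(2μ²) − 2L(B² − 1)/μ²) ‖∇f(w₀)‖²; in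 particular, if μ = 5LB² then Σ_{k=1}^N p_k f(w̲_k) ≤ f(w₀) − ((6B² − 1)/(50LB⁴)) ‖∇f(w₀)‖². -/
open scoped RealInnerProductSpace
open Set

variable {E : Type*} [NormedAddCommGroup E] [InnerProductSpace ℝ E] [CompleteSpace E]

/-- First-order inequality for a differentiable convex function. -/
lemma convex_first_order {F : E → ℝ} (hc : ConvexOn ℝ Set.univ F)
    (hd : ContDiff ℝ 1 F) (x y : E) :
    F x + ⟪gradient F x, y - x⟫ ≤ F y := by
  set φ : ℝ → ℝ := fun t => F (x + t • (y - x)) with hφ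
  have hφc : ConvexOn ℝ Set.univ φ := by
    have := hc.comp_affineMap (AffineMap.lineMap x y : ℝ →ᵃ[ℝ] E)
    simp only [Set.preimage_univ] at this
    have e : φ = F ∘ ⇑(AffineMap.lineMap x y : ℝ →ᵃ[ℝ] E) := by
      funext t
      simp [φ, AffineMap.lineMap_apply, add_comm]
    rw [e]; exact this
  have hline : HasDerivAt (fun t : ℝ => x + t • (y - x)) (y - x) 0 := by
    simpa using ((hasDerivAt_id (0:ℝ)).smul_const (y - x)).const_add x
  have hFd : HasFDerivAt F (InnerProductSpace.toDual ℝ E (gradient F x)) x :=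
    ((hd.differentiable one_ne_zero) x).hasGradientAt.hasFDerivAt
  have hFd' : HasFDerivAt F (InnerProductSpace.toDual ℝ E (gradient F x))
      (x + (0:ℝ) • (y - x)) := by simpa using hFd
  have hφd : HasDerivAt φ ⟪gradient F x, y - x⟫ 0 := by
    have := hFd'.comp_hasDerivAt 0 hline
    exact this.congr_deriv (by rw [InnerProductSpace.toDual_apply_apply])
  have hsl := hφc.le_slope_of_hasDerivAt (Set.mem_univ (0:ℝ)) (Set.mem_univ (1:ℝ))
    zero_lt_one hφd
  rw [slope_def_field] at hsl
  have h0 : φ 0 = F x := by simp [φ]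
  have h1 : φ 1 = F y := by simp [φ]
  rw [h0, h1] at hsl
  linarith [hsl]

/-- Crude descent lemma with constant `L` (instead of `L/2`). -/
lemma descent_crude {f : E → ℝ} (hd : ContDiff ℝ 1 f) {L : ℝ} (hL : 0 ≤ L)
    (hlip : ∀ a b, ‖gradient f a - gradient f b‖ ≤ L * ‖a - b‖) (x y : E) :
    f y ≤ f x + ⟪gradient f x, y - x⟫ + L * ‖y - x‖ ^ 2 := by
  set c := gradient f x with hc
  set q : E → ℝ := fun w => f w - (InnerProductSpace.toDual ℝ E c) w with hq
  have hfd : ∀ w, HasFDerivAt f (InnerProductSpace.toDual ℝ E (gradient f w)) w :=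
    fun w => ((hd.differentiable one_ne_zero) w).hasGradientAt.hasFDerivAt
  have key : ‖q y - q x‖ ≤ (L * ‖y - x‖) * ‖y - x‖ := by
    apply Convex.norm_image_sub_le_of_norm_hasFDerivWithin_le
      (f' := fun w => InnerProductSpace.toDual ℝ E (gradient f w) -
        InnerProductSpace.toDual ℝ E c)
      (fun w _ => ((hfd w).sub ((InnerProductSpace.toDual ℝ E c).hasFDerivAt)).hasFDerivWithinAt)
      ?_ (convex_segment x y) (left_mem_segment ℝ x y) (right_mem_segment ℝ x y)
    intro w hw
    rw [← map_sub, (InnerProductSpace.toDual ℝ E).norm_map]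
    refine (hlip w x).trans ?_
    gcongr
    obtain ⟨a, b, ha, hb, hab, rfl⟩ := hw
    have : a • x + b • y - x = b • (y - x) := by
      have : a = 1 - b := by linarith
      subst this; module
    rw [this, norm_smul]
    simpa [abs_of_nonneg hb] using
      mul_le_of_le_one_left (norm_nonneg (y - x)) (by linarith : b ≤ 1)
  have hqq : q y - q x = f y - f x - ⟪c, y - x⟫ := by
    simp [q, InnerProductSpace.toDual_apply_apply, inner_sub_right]; ring
  have := (le_abs_self (q y - q x)).trans (le_of_eq (Real.norm_eq_abs _).symm) |>.trans key
  rw [hqq] at this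
  nlinarith [this]

/-- First-order optimality for the FedDANE subproblem. -/
lemma feddane_opt {F : E → ℝ} (hFd : ContDiff ℝ 1 F) (w₀ c : E) (μ : ℝ)
    {P : E → ℝ} (hP : P = fun w => F w + ⟪c, w - w₀⟫ + μ / 2 * ‖w - w₀‖ ^ 2)
    {x : E} (hmin : ∀ v, P x ≤ P v) :
    gradient F x + c + μ • (x - w₀) = 0 := by
  have hloc : IsLocalMin P x := Filter.Eventually.of_forall hmin
  have h1 : HasFDerivAt F (InnerProductSpace.toDual ℝ E (gradient F x)) x :=
    ((hFd.differentiable one_ne_zero) x).hasGradientAt.hasFDerivAt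
  have h2 : HasFDerivAt (fun w : E => ⟪c, w - w₀⟫)
      ((InnerProductSpace.toDual ℝ E c : E →L[ℝ] ℝ)) x := by
    have he : (fun w : E => ⟪c, w - w₀⟫) =
        fun w => (InnerProductSpace.toDual ℝ E c) w - ⟪c, w₀⟫ := by
      funext w; simp [inner_sub_right]
    rw [he]
    exact (InnerProductSpace.toDual ℝ E c).hasFDerivAt.sub_const _
  have hsub : HasFDerivAt (fun w : E => w - w₀) (ContinuousLinearMap.id ℝ E) x :=
    (hasFDerivAt_id x).sub_const w₀
  have hin := (hsub.inner (𝕜 := ℝ) hsub).const_mul (μ / 2)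
  have h3 : HasFDerivAt (fun w : E => μ / 2 * ‖w - w₀‖ ^ 2)
      ((μ / 2) • ((fderivInnerCLM ℝ (x - w₀, x - w₀)).comp
        ((ContinuousLinearMap.id ℝ E).prod (ContinuousLinearMap.id ℝ E)))) x := by
    have e : (fun w : E => μ / 2 * ‖w - w₀‖ ^ 2) = fun y => μ / 2 * ⟪y - w₀, y - w₀⟫ := by
      funext w; rw [real_inner_self_eq_norm_sq]
    rw [e]; exact hin
  have hTot := (h1.add h2).add h3
  have hzero := hloc.hasFDerivAt_eq_zero (by rw [hP]; exact hTot)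
  have hv : ∀ v : E, ⟪gradient F x + c + μ • (x - w₀), v⟫ = 0 := by
    intro v
    have := congrFun (congrArg DFunLike.coe hzero) v
    simp only [ContinuousLinearMap.add_apply, ContinuousLinearMap.smul_apply,
      ContinuousLinearMap.comp_apply, ContinuousLinearMap.prod_apply,
      ContinuousLinearMap.id_apply, fderivInnerCLM_apply,
      InnerProductSpace.toDual_apply_apply, ContinuousLinearMap.zero_apply,
      smul_eq_mul] at this
    rw [real_inner_comm v (x - w₀)] at this
    rw [inner_add_left, inner_add_left, real_inner_smul_left]
    linear_combination this + μ * real_inner_comm v (x - w₀)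
  exact inner_self_eq_zero.mp (hv _)

set_option maxHeartbeats 1000000 in
/-- one-step decrease for exact FedDANE with a single selected
device, convex case.  Each `F k` is convex with `L`-Lipschitz gradient, `f` has
`L`-Lipschitz gradient, `∑ k, p k ‖∇F_k(w₀)‖² ≤ B² ‖∇f(w₀)‖²`, and with the exact
full gradient `g = ∇f(w₀)`, `w̲_k` exactly minimizes the FedDANE subproblem of
device `k`.  Then
`∑ k, p k f(w̲_k) ≤ f(w₀) - (1/μ - 5L/(2μ²) - 2L(B²-1)/μ²)‖∇f(w₀)‖²`;
in particular, if `μ = 5LB²` then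
`∑ k, p k f(w̲_k) ≤ f(w₀) - ((6B²-1)/(50LB⁴))‖∇f(w₀)‖²`. -/
theorem feddane_exact_one_step_decrease {d N : ℕ}
    (F : Fin N → EuclideanSpace ℝ (Fin d) → ℝ) (hF : ∀ k, ContDiff ℝ 1 (F k))
    (p : Fin N → ℝ) (hp : ∀ k, 0 ≤ p k) (hpsum : ∑ k, p k = 1)
    (f : EuclideanSpace ℝ (Fin d) → ℝ) (hf : f = fun w => ∑ k, p k * F k w)
    (w₀ : EuclideanSpace ℝ (Fin d)) (μ L B : ℝ)
    (hμ : 0 < μ) (hL : 0 < L) (hB : 1 ≤ B)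
    (hconv : ∀ k, ConvexOn ℝ Set.univ (F k))
    (hFlip : ∀ k x y, ‖gradient (F k) x - gradient (F k) y‖ ≤ L * ‖x - y‖)
    (hflip : ∀ x y, ‖gradient f x - gradient f y‖ ≤ L * ‖x - y‖)
    (hdissim : ∑ k, p k * ‖gradient (F k) w₀‖ ^ 2 ≤ B ^ 2 * ‖gradient f w₀‖ ^ 2)
    (g : EuclideanSpace ℝ (Fin d)) (hg : g = gradient f w₀)
    (P : Fin N → EuclideanSpace ℝ (Fin d) → ℝ)
    (hP : P = fun k w =>
      F k w + ⟪g - gradient (F k) w₀, w - w₀⟫ + μ / 2 * ‖w - w₀‖ ^ 2)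
    (wbar : Fin N → EuclideanSpace ℝ (Fin d))
    (hmin : ∀ k v, P k (wbar k) ≤ P k v) :
    (∑ k, p k * f (wbar k)) ≤
        f w₀ - (1 / μ - 5 * L / (2 * μ ^ 2) - 2 * L * (B ^ 2 - 1) / μ ^ 2) *
          ‖gradient f w₀‖ ^ 2 ∧
      (μ = 5 * L * B ^ 2 →
        (∑ k, p k * f (wbar k)) ≤
          f w₀ - (6 * B ^ 2 - 1) / (50 * L * B ^ 4) * ‖gradient f w₀‖ ^ 2) := by
  have hfC : ContDiff ℝ 1 f := by
    rw [hf]; exact ContDiff.sum fun k _ => contDiff_const.mul (hF k)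
  -- per-device bound
  have key : ∀ k, f (wbar k) ≤ f w₀ - (1 / μ - 2 * L / μ ^ 2) * ‖g‖ ^ 2 := by
    intro k
    set x := wbar k with hx
    set Δ := x - w₀ with hΔdef
    have hopt := feddane_opt (hF k) w₀ (g - gradient (F k) w₀) μ
      (by rw [hP]) (hmin k)
    set e := gradient (F k) w₀ - gradient (F k) x with he
    have hopt' : gradient (F k) x + (g - gradient (F k) w₀) + μ • Δ = 0 := hopt
    clear_value e Δ x
    have heq : μ • Δ = e - g := by
      rw [he]
      linear_combination (norm := module) hopt'
    have hen : ‖e‖ ≤ L * ‖Δ‖ := by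
      rw [he, hΔdef, norm_sub_rev x w₀]
      exact hFlip k w₀ x
    have hmono : ⟪e, Δ⟫ ≤ 0 := by
      have h1 := convex_first_order (hconv k) (hF k) w₀ x
      have h2 := convex_first_order (hconv k) (hF k) x w₀
      have hsp : ⟪e, Δ⟫ = ⟪gradient (F k) w₀, x - w₀⟫ + ⟪gradient (F k) x, w₀ - x⟫ := by
        simp only [he, hΔdef, inner_sub_left, inner_sub_right]; ring
      linarith
    have hgd : μ * ‖Δ‖ ^ 2 = ⟪e, Δ⟫ - ⟪g, Δ⟫ := by
      have h := congrArg (fun z => (⟪z, Δ⟫ : ℝ)) heq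
      simp only [real_inner_smul_left, inner_sub_left] at h
      rw [real_inner_self_eq_norm_sq] at h
      linarith [h]
    have hCS : -⟪g, Δ⟫ ≤ ‖g‖ * ‖Δ‖ :=
      (neg_le_abs _).trans (abs_real_inner_le_norm g Δ)
    have hΔle : ‖Δ‖ ≤ ‖g‖ / μ := by
      rcases (norm_nonneg Δ).eq_or_lt with h0 | h0
      · rw [← h0]; positivity
      · rw [le_div_iff₀ hμ]
        nlinarith [hgd, hmono, hCS]
    have hgΔ : μ * ⟪g, Δ⟫ ≤ -‖g‖ ^ 2 + L * ‖g‖ * ‖Δ‖ := by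
      have h := congrArg (fun z => (⟪g, z⟫ : ℝ)) heq
      simp only [real_inner_smul_right, inner_sub_right] at h
      rw [real_inner_self_eq_norm_sq] at h
      have h2 : ⟪g, e⟫ ≤ ‖g‖ * (L * ‖Δ‖) :=
        (real_inner_le_norm g e).trans
          (mul_le_mul_of_nonneg_left hen (norm_nonneg g))
      nlinarith [h, h2]
    have hdes := descent_crude hfC hL.le hflip w₀ x
    rw [← hg, ← hΔdef] at hdes
    have hb1 : L * ‖g‖ * ‖Δ‖ ≤ L * ‖g‖ * (‖g‖ / μ) := by
      apply mul_le_mul_of_nonneg_left hΔle; positivity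
    have hb2 : L * ‖Δ‖ ^ 2 ≤ L * (‖g‖ / μ) ^ 2 := by
      gcongr
    have hb3 : ⟪g, Δ⟫ ≤ (-‖g‖ ^ 2 + L * ‖g‖ * (‖g‖ / μ)) / μ := by
      rw [le_div_iff₀ hμ]
      linarith [hgΔ, hb1]
    have hrhs : (-‖g‖ ^ 2 + L * ‖g‖ * (‖g‖ / μ)) / μ + L * (‖g‖ / μ) ^ 2 =
        -((1 / μ - 2 * L / μ ^ 2) * ‖g‖ ^ 2) := by
      field_simp; ring
    linarith [hdes, hb3, hb2, hrhs]
  -- sum the per-device bounds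
  have hsum : (∑ k, p k * f (wbar k)) ≤
      f w₀ - (1 / μ - 2 * L / μ ^ 2) * ‖g‖ ^ 2 := by
    calc (∑ k, p k * f (wbar k))
        ≤ ∑ k, p k * (f w₀ - (1 / μ - 2 * L / μ ^ 2) * ‖g‖ ^ 2) :=
          Finset.sum_le_sum fun k _ => mul_le_mul_of_nonneg_left (key k) (hp k)
      _ = (∑ k, p k) * (f w₀ - (1 / μ - 2 * L / μ ^ 2) * ‖g‖ ^ 2) := by
          rw [Finset.sum_mul]
      _ = f w₀ - (1 / μ - 2 * L / μ ^ 2) * ‖g‖ ^ 2 := by rw [hpsum, one_mul]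
  rw [hg] at hsum
  have hB1 : (0:ℝ) ≤ B ^ 2 - 1 := by nlinarith
  have hG : (0:ℝ) ≤ ‖gradient f w₀‖ ^ 2 := by positivity
  have hcoef : (1 / μ - 5 * L / (2 * μ ^ 2) - 2 * L * (B ^ 2 - 1) / μ ^ 2) ≤
      1 / μ - 2 * L / μ ^ 2 := by
    have hpos : (0:ℝ) ≤ (L / 2 + 2 * L * (B ^ 2 - 1)) / μ ^ 2 := by
      apply div_nonneg _ (by positivity)
      nlinarith
    have hring : (1 / μ - 5 * L / (2 * μ ^ 2) - 2 * L * (B ^ 2 - 1) / μ ^ 2) =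
        (1 / μ - 2 * L / μ ^ 2) - (L / 2 + 2 * L * (B ^ 2 - 1)) / μ ^ 2 := by
      ring
    linarith [hring, hpos]
  have part1 : (∑ k, p k * f (wbar k)) ≤
      f w₀ - (1 / μ - 5 * L / (2 * μ ^ 2) - 2 * L * (B ^ 2 - 1) / μ ^ 2) *
        ‖gradient f w₀‖ ^ 2 := by
    have := mul_le_mul_of_nonneg_right hcoef hG
    linarith
  refine ⟨part1, fun hμ5 => ?_⟩
  have hB0 : (0:ℝ) < B := zero_lt_one.trans_le hB
  have hco : (6 * B ^ 2 - 1) / (50 * L * B ^ 4) =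
      1 / μ - 5 * L / (2 * μ ^ 2) - 2 * L * (B ^ 2 - 1) / μ ^ 2 := by
    rw [hμ5]
    field_simp
    ring
  rw [hco]
  exact part1
end
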